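/- Fix an integer N ≥ 0 and real numbers x, y, ε. Define real numbers K_n for −1 ≤ n ≤ N by K_{−1} = 0, K_0 = 1, and for 1 ≤ n ≤ N by K_n = (1/n)·( x + y/(N−n+1) + n − 1 − N − 2ε )·K_{n−1} − (x/n)·K_{n−2}. Then (N!)^2 · K_N = P_N^{(N,ε)}(x,y), the value of the constraint polynomial at (x,y). -/

import Mathlib

/-- The constraint polynomials `P_k^{(N,ε)}(x,y)` of the asymmetric quantum Rabi model,
as real-valued functions, defined by the three-term recurrence. -/
def constraintPoly (N : ℕ) (ε x y : ℝ) : ℕ → ℝ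
  | 0 => 1
  | 1 => x + y - 1 - 2 * ε
  | k + 2 =>
      (((k : ℝ) + 2) * x + y - ((k : ℝ) + 2) * (((k : ℝ) + 2) + 2 * ε)) *
          constraintPoly N ε x y (k + 1) -
        ((k : ℝ) + 2) * ((k : ℝ) + 1) * ((N : ℝ) - ((k : ℝ) + 1)) * x *
          constraintPoly N ε x y k

def triG (d e : ℕ → ℝ) : ℕ → ℕ → ℝ
  | 0, _ => 1
  | 1, i => d i
  | (m+2), i => d i * triG d e (m+1) (i+1) - e (i+1) * triG d e m (i+2)

noncomputable def dd (ε x y : ℝ) : ℕ → ℝ := fun k => (k : ℝ) * x + y - (k : ℝ) * ((k : ℝ) + 2 * ε)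
noncomputable def ee (N : ℕ) (x : ℝ) : ℕ → ℝ :=
  fun k => (k : ℝ) * ((k : ℝ) - 1) * ((N : ℝ) - (k : ℝ) + 1) * x

/-- Expansion along the last row. -/
theorem triG_last (d e : ℕ → ℝ) :
    ∀ m i, triG d e (m+2) i = d (i+m+1) * triG d e (m+1) i - e (i+m+1) * triG d e m i := by
  intro m
  induction m using Nat.strong_induction_on with
  | _ m ih =>
    match m with
    | 0 => intro i; simp [triG]; ring
    | 1 => intro i; simp only [triG]
           have h1 : i + 1 + 1 = i + 2 := by omega
           rw [h1]; ring
    | (m+2) =>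
      intro i
      have h1 := ih (m+1) (by omega) (i+1)
      have h2 := ih m (by omega) (i+2)
      have e1 : i + 1 + (m + 1) + 1 = i + m + 3 := by omega
      have e2 : i + 2 + m + 1 = i + m + 3 := by omega
      rw [e1] at h1
      rw [e2] at h2
      show d i * triG d e (m+3) (i+1) - e (i+1) * triG d e (m+2) (i+2)
          = d (i + (m+2) + 1) * triG d e (m+3) i - e (i + (m+2) + 1) * triG d e (m+2) i
      have e3 : i + (m+2) + 1 = i + m + 3 := by omega
      rw [e3, h1, h2]
      show d i * _ - e (i+1) * _
          = d (i+m+3) * (d i * triG d e (m+2) (i+1) - e (i+1) * triG d e (m+1) (i+2))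
            - e (i+m+3) * (d i * triG d e (m+1) (i+1) - e (i+1) * triG d e m (i+2))
      ring

theorem constraintPoly_eq_triG (N : ℕ) (ε x y : ℝ) :
    ∀ n, constraintPoly N ε x y n = triG (dd ε x y) (ee N x) n 1 := by
  intro n
  induction n using Nat.strong_induction_on with
  | _ n ih =>
    match n with
    | 0 => simp [constraintPoly, triG]
    | 1 => simp [constraintPoly, triG, dd]; push_cast; ring
    | (k+2) =>
      rw [triG_last]
      have e1 : 1 + k + 1 = k + 2 := by omega
      rw [e1, ← ih (k+1) (by omega), ← ih k (by omega)]
      show constraintPoly N ε x y (k+2) = _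
      rw [constraintPoly]
      simp only [dd, ee]
      push_cast
      ring

theorem cK_eq_triG (N : ℕ) (x y ε : ℝ) (K : ℤ → ℝ)
    (hKneg : K (-1) = 0) (hK0 : K 0 = 1)
    (hrec : ∀ n : ℤ, 1 ≤ n → n ≤ (N : ℤ) →
      K n = (1 / (n : ℝ)) * (x + y / ((N : ℝ) - (n : ℝ) + 1) + (n : ℝ) - 1 - (N : ℝ) - 2 * ε)
              * K (n - 1)
            - (x / (n : ℝ)) * K (n - 2)) :
    ∀ m, m ≤ N →
      (m.factorial : ℝ) * (N.descFactorial m : ℝ) * K (m : ℤ)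
        = triG (dd ε x y) (ee N x) m (N - m + 1) := by
  intro m
  induction m using Nat.strong_induction_on with
  | _ m ih =>
    match m with
    | 0 => intro _; simp [triG, hK0]
    | 1 =>
      intro hm
      have hrec1 := hrec 1 (le_refl 1) (by exact_mod_cast hm)
      have hN : (N : ℝ) ≠ 0 := by
        have : (1:ℝ) ≤ (N:ℝ) := by exact_mod_cast hm
        linarith
      have h1 : N - 1 + 1 = N := by omega
      simp only [triG, h1, dd]
      norm_num at hrec1
      have hcast : K ((1:ℕ) : ℤ) = K 1 := by norm_num
      rw [hcast, hrec1, hK0, hKneg]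
      have hd : (N.descFactorial 1 : ℝ) = (N:ℝ) := by simp [Nat.descFactorial]
      rw [hd]
      norm_num
      field_simp
      ring
    | (m+2) =>
      intro hm
      have ih1 := ih (m+1) (by omega) (by omega)
      have ih0 := ih m (by omega) (by omega)
      -- the recurrence at n = m+2
      have hrec2 := hrec ((m:ℤ)+2) (by omega) (by omega)
      -- unfold triG at size m+2
      have e1 : N - (m+2) + 1 + 1 = N - (m+1) + 1 := by omega
      have e2 : N - (m+2) + 1 + 2 = N - m + 1 := by omega
      show _ = triG (dd ε x y) (ee N x) (m+2) (N - (m+2) + 1)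
      rw [triG, e1, e2, ← ih1, ← ih0]
      -- cast facts
      have hc1 : ((N - (m+2) + 1 : ℕ) : ℝ) = (N:ℝ) - (m:ℝ) - 1 := by
        have : N - (m+2) + 1 = N - (m+1) := by omega
        rw [this, Nat.cast_sub (by omega)]; push_cast; ring
      have hc2 : ((N - (m+1) + 1 : ℕ) : ℝ) = (N:ℝ) - (m:ℝ) := by
        have : N - (m+1) + 1 = N - m := by omega
        rw [this, Nat.cast_sub (by omega)]
      -- descFactorial / factorial facts
      have hd2 : (N.descFactorial (m+2) : ℝ)
          = ((N:ℝ) - (m:ℝ) - 1) * ((N:ℝ) - (m:ℝ)) * (N.descFactorial m : ℝ) := by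
        rw [Nat.descFactorial_succ, Nat.descFactorial_succ]
        push_cast [Nat.cast_sub (by omega : m + 1 ≤ N), Nat.cast_sub (by omega : m ≤ N)]
        ring
      have hd1 : (N.descFactorial (m+1) : ℝ) = ((N:ℝ) - (m:ℝ)) * (N.descFactorial m : ℝ) := by
        rw [Nat.descFactorial_succ]
        push_cast [Nat.cast_sub (by omega : m ≤ N)]
        ring
      have hf2 : ((m+2).factorial : ℝ) = ((m:ℝ)+2) * ((m:ℝ)+1) * (m.factorial : ℝ) := by
        rw [Nat.factorial_succ, Nat.factorial_succ]; push_cast; ring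
      have hf1 : ((m+1).factorial : ℝ) = ((m:ℝ)+1) * (m.factorial : ℝ) := by
        rw [Nat.factorial_succ]; push_cast; ring
      -- nonvanishing
      have hm2 : ((m:ℝ)+2) ≠ 0 := by positivity
      have hNm1 : (N:ℝ) - (m:ℝ) - 1 ≠ 0 := by
        have : (m:ℝ) + 2 ≤ (N:ℝ) := by exact_mod_cast hm
        intro h; nlinarith
      -- rewrite the K recurrence
      have hKm2 : K ((m+2:ℕ) : ℤ) = K ((m:ℤ)+2) := by norm_num
      have hK1 : ((m:ℤ)+2-1) = ((m+1:ℕ):ℤ) := by push_cast; ring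
      have hK2 : ((m:ℤ)+2-2) = ((m:ℕ):ℤ) := by push_cast; ring
      rw [hK1, hK2] at hrec2
      push_cast at hrec2
      have hden : (N:ℝ) - ((m:ℝ) + 2) + 1 = (N:ℝ) - (m:ℝ) - 1 := by ring
      rw [hden] at hrec2
      have key : ((m:ℝ)+2) * ((N:ℝ) - (m:ℝ) - 1) * K ((m:ℤ)+2)
          = (((N:ℝ)-(m:ℝ)-1)*x + y + ((N:ℝ)-(m:ℝ)-1)*((m:ℝ)+1-(N:ℝ)-2*ε)) * K ((m+1:ℕ):ℤ)
            - (((N:ℝ)-(m:ℝ)-1)*x) * K ((m:ℕ):ℤ) := by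
        rw [hrec2]
        field_simp
        push_cast
        ring
      rw [hKm2, hd2, hd1, hf2, hf1]
      simp only [dd, ee, hc1, hc2]
      linear_combination ((m:ℝ)+1) * ((N:ℝ)-(m:ℝ)) * (m.factorial:ℝ) * (N.descFactorial m:ℝ) * key

/-- if `K : ℤ → ℝ` satisfies `K (-1) = 0`, `K 0 = 1` and the stated
recurrence for `1 ≤ n ≤ N`, then `(N!)² ⬝ K N = P_N^{(N,ε)}(x,y)`. -/
theorem factorial_sq_mul_K_eq_constraintPoly (N : ℕ) (x y ε : ℝ) (K : ℤ → ℝ)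
    (hKneg : K (-1) = 0) (hK0 : K 0 = 1)
    (hrec : ∀ n : ℤ, 1 ≤ n → n ≤ (N : ℤ) →
      K n = (1 / (n : ℝ)) * (x + y / ((N : ℝ) - (n : ℝ) + 1) + (n : ℝ) - 1 - (N : ℝ) - 2 * ε)
              * K (n - 1)
            - (x / (n : ℝ)) * K (n - 2)) :
    ((N.factorial : ℝ)) ^ 2 * K (N : ℤ) = constraintPoly N ε x y N := by
  have h1 := cK_eq_triG N x y ε K hKneg hK0 hrec N le_rfl
  have h2 := constraintPoly_eq_triG N ε x y N
  rw [Nat.descFactorial_self, Nat.sub_self] at h1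
  rw [h2]
  have h3 : (0:ℕ) + 1 = 1 := rfl
  rw [h3] at h1
  rw [← h1]
  ring
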